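/- If S ~ (V/B) χ²_{m-p} (i.e., S/(V+A) ~ χ²_{m-p} with B = V/(V+A)) and B̂ = V(m-p-2)/S with m > p + 2, then E[S(B̂ - B)²] = 2VB. -/

import Mathlib

open MeasureTheory Real

/-- The chi-squared distribution with `k` degrees of freedom, as a measure on `ℝ`. -/
noncomputable def chiSqMeasure (k : ℕ) : Measure ℝ :=
  volume.withDensity fun x => ENNReal.ofReal
    (if 0 < x then x ^ ((k : ℝ) / 2 - 1) * Real.exp (-x / 2) /
        (2 ^ ((k : ℝ) / 2) * Real.Gamma ((k : ℝ) / 2)) else 0)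

open Set in
lemma moment_aux {a : ℝ} (ha : 0 < a) :
    ∫ x in Ioi (0:ℝ), x ^ (a - 1) * Real.exp (-x / 2) = 2 ^ a * Real.Gamma a := by
  have h := Real.integral_rpow_mul_exp_neg_mul_Ioi ha (by norm_num : (0:ℝ) < 1/2)
  rw [show ((1:ℝ)/(1/2)) = 2 by norm_num] at h
  rw [← h]
  refine setIntegral_congr_fun measurableSet_Ioi fun x hx => ?_
  rw [show -x/2 = -(1/2*x) by ring]

open Set in
lemma int_aux {a : ℝ} (ha : 0 < a) :
    IntegrableOn (fun x : ℝ => x ^ (a - 1) * Real.exp (-x / 2)) (Ioi 0) := by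
  have h := integrableOn_rpow_mul_exp_neg_mul_rpow
    (p := 1) (by linarith : (-1:ℝ) < a - 1) zero_lt_one (by norm_num : (0:ℝ) < 1/2)
  exact h.congr_fun (fun x hx => by
    beta_reduce; rw [Real.rpow_one, show -(1/2:ℝ)*x = -x/2 by ring]) measurableSet_Ioi

open Set in
open scoped ENNReal NNReal in
set_option maxHeartbeats 1000000 in
lemma chiSq_integral {k : ℕ} (hk : 2 < k) (c d B : ℝ) :
    ∫ x, c * x * (d / x - B) ^ 2 ∂(chiSqMeasure k) =
      c * (d ^ 2 / ((k:ℝ) - 2) - 2 * d * B + B ^ 2 * k) := by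
  set K := (k:ℝ) with hKdef
  have hK : 2 < K := by rw [hKdef]; exact_mod_cast hk
  have hΓpos : 0 < Real.Gamma (K/2) := Real.Gamma_pos_of_pos (by linarith)
  have hP2 : (0:ℝ) < 2 ^ (K/2) := Real.rpow_pos_of_pos (by norm_num) _
  set N : ℝ := 2 ^ (K/2) * Real.Gamma (K/2) with hN
  have hNpos : 0 < N := by positivity
  set f : ℝ → ℝ := fun x => if 0 < x then x ^ (K/2 - 1) * Real.exp (-x/2) / N else 0 with hf
  have hfnn : ∀ x, 0 ≤ f x := fun x => by
    rw [hf]; dsimp only; split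
    · positivity
    · exact le_refl _
  have hfm : Measurable f := by
    apply Measurable.ite measurableSet_Ioi _ measurable_const
    fun_prop
  have hchi : chiSqMeasure k = volume.withDensity fun x => ((f x).toNNReal : ℝ≥0∞) := by
    unfold chiSqMeasure
    rfl
  set G : ℝ → ℝ := fun x => c * x * (d / x - B) ^ 2 with hG
  rw [hchi, integral_withDensity_eq_integral_smul hfm.real_toNNReal]
  have hsmul : ∀ x, (f x).toNNReal • G x = f x * G x := fun x => by
    rw [NNReal.smul_def, Real.coe_toNNReal _ (hfnn x), smul_eq_mul]
  simp_rw [show ∀ x, (f x).toNNReal • (c * x * (d / x - B) ^ 2) = f x * G x from hsmul]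
  rw [← setIntegral_eq_integral_of_forall_compl_eq_zero
    (s := Ioi (0:ℝ)) (fun x hx => by
      rw [hf]; dsimp only; rw [if_neg (by simpa using hx), zero_mul])]
  have key : ∀ x ∈ Ioi (0:ℝ), f x * G x =
      (c * d^2 / N) * (x ^ (K/2 - 1 - 1) * Real.exp (-x/2))
      - (2 * c * d * B / N) * (x ^ (K/2 - 1) * Real.exp (-x/2))
      + (c * B^2 / N) * (x ^ (K/2 + 1 - 1) * Real.exp (-x/2)) := by
    intro x hx
    have hx0 : x ≠ 0 := ne_of_gt hx
    rw [hf, hG]; dsimp only; rw [if_pos (mem_Ioi.mp hx)]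
    rw [show K/2 - 1 - 1 = (K/2-1) + (-1) by ring, Real.rpow_add hx, Real.rpow_neg_one,
      show K/2 + 1 - 1 = (K/2-1) + 1 by ring, Real.rpow_add hx, Real.rpow_one]
    field_simp
    ring
  rw [setIntegral_congr_fun measurableSet_Ioi key]
  have i1 := (int_aux (by linarith : (0:ℝ) < K/2 - 1)).const_mul (c * d^2 / N)
  have i2 := (int_aux (by linarith : (0:ℝ) < K/2)).const_mul (2 * c * d * B / N)
  have i3 := (int_aux (by linarith : (0:ℝ) < K/2 + 1)).const_mul (c * B^2 / N)
  have i12 : Integrable (fun x => c * d^2 / N * (x ^ (K/2 - 1 - 1) * Real.exp (-x/2))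
      - 2 * c * d * B / N * (x ^ (K/2 - 1) * Real.exp (-x/2))) (volume.restrict (Ioi 0)) :=
    i1.sub i2
  rw [integral_add i12 i3, integral_sub i1 i2,
    integral_const_mul, integral_const_mul, integral_const_mul,
    moment_aux (by linarith : (0:ℝ) < K/2 - 1), moment_aux (by linarith : (0:ℝ) < K/2),
    moment_aux (by linarith : (0:ℝ) < K/2 + 1)]
  -- Gamma recurrences
  have h21 : K/2 - 1 ≠ 0 := by intro h; nlinarith
  have hg1 : Real.Gamma (K/2) = (K/2 - 1) * Real.Gamma (K/2 - 1) := by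
    have h := Real.Gamma_add_one h21
    rw [show K/2 - 1 + 1 = K/2 by ring] at h
    exact h
  have hg2 : Real.Gamma (K/2 + 1) = (K/2) * Real.Gamma (K/2) := by
    exact Real.Gamma_add_one (by positivity)
  have hp1 : (2:ℝ) ^ (K/2 - 1) = 2 ^ (K/2) / 2 := by
    rw [Real.rpow_sub (by norm_num), Real.rpow_one]
  have hp2 : (2:ℝ) ^ (K/2 + 1) = 2 ^ (K/2) * 2 := by
    rw [Real.rpow_add (by norm_num), Real.rpow_one]
  have hΓ1pos : 0 < Real.Gamma (K/2 - 1) := Real.Gamma_pos_of_pos (by linarith)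
  have h2 : K - 2 ≠ 0 := by intro h; linarith
  have v1 : (2:ℝ) ^ (K/2 - 1) * Real.Gamma (K/2 - 1) = N / (K - 2) := by
    rw [hp1, hN, hg1]
    field_simp
  have v3 : (2:ℝ) ^ (K/2 + 1) * Real.Gamma (K/2 + 1) = N * K := by
    rw [hp2, hg2, hN]
    ring
  rw [v1, v3, ← hN]
  field_simp

/-- If `S·B/V ~ χ²_{m-p}` (i.e. `S ~ (V/B) χ²_{m-p}` with `B = V/(V+A)`)
and `B̂ = V(m-p-2)/S` with `m > p + 2`, then `E[S(B̂ - B)²] = 2VB`. -/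
theorem statement8 {m p : ℕ} (hm : m > p + 2)
    (V A : ℝ) (hV : 0 < V) (hA : 0 < A) (B : ℝ) (hB : B = V / (V + A))
    {Ω : Type*} [MeasurableSpace Ω] (P : Measure Ω) [IsProbabilityMeasure P]
    (S : Ω → ℝ) (hmeas : Measurable S)
    (hlaw : Measure.map (fun ω => S ω * B / V) P = chiSqMeasure (m - p)) :
    ∫ ω, S ω * (V * ((m : ℝ) - p - 2) / S ω - B) ^ 2 ∂P = 2 * V * B := by
  have hVA : 0 < V + A := by linarith
  have hBpos : 0 < B := by rw [hB]; positivity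
  have hk2 : 2 < m - p := by omega
  have hkR : ((m - p : ℕ) : ℝ) = (m : ℝ) - p := by
    have hpm : p ≤ m := by omega
    push_cast [hpm]
    ring
  set K : ℝ := ((m - p : ℕ) : ℝ) with hK
  set c : ℝ := V / B with hc
  set d : ℝ := B * (K - 2) with hd
  have hcB : c * B = V := by rw [hc]; field_simp
  have hcd : c * d = V * (K - 2) := by
    rw [hd, hc]; field_simp
  set X : Ω → ℝ := fun ω => S ω * B / V with hX
  have hSX : ∀ ω, S ω = c * X ω := fun ω => by
    rw [hX, hc]; field_simp
  set g : ℝ → ℝ := fun x => c * x * (d / x - B) ^ 2 with hg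
  have h1 : ∀ ω, S ω * (V * ((m : ℝ) - p - 2) / S ω - B) ^ 2 = g (X ω) := by
    intro ω
    rw [hg]
    dsimp only
    rw [← mul_div_mul_left d (X ω) (by positivity : c ≠ 0), hcd, ← hSX ω, hkR]
  simp_rw [h1]
  have hXm : Measurable X := (hmeas.mul_const B).div_const V
  have hgm : Measurable g := by
    apply Measurable.mul
    · exact measurable_const.mul measurable_id
    · exact ((measurable_const.div measurable_id).sub measurable_const).pow_const 2
  rw [← integral_map (φ := X) (f := g) hXm.aemeasurable
    hgm.aestronglyMeasurable, hlaw, hg, chiSq_integral hk2 c d B]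
  rw [← hK]
  have hKgt : (2:ℝ) < K := by rw [hK]; exact_mod_cast hk2
  have h2 : K - 2 ≠ 0 := sub_ne_zero.mpr (ne_of_gt hKgt)
  have hdiv : (B * (K - 2)) ^ 2 / (K - 2) = B ^ 2 * (K - 2) := by
    field_simp
  rw [hd, hdiv, ← hcB]
  ring
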